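/- arXiv:2306.05158 — 5 statements merged into one kernel-verified Lean document; each statement's English description precedes it below -/
import Mathlib

section
/- Define the Mittag-Leffler polynomials g_n(σ) by the generating function ((1+z)/(1-z))^σ = ∑_{n=0}^∞ g_n(σ) z^n for |z| < 1, i.e., g_n(σ) is the n-th Taylor coefficient at z = 0 of ((1+z)/(1-z))^σ. Then g_0(σ) = 1 and for n ≥ 1, g_n(σ) = 2σ · ∑_{j=0}^{n-1} [(1-n)_j (1-σ)_j / ((2)_j j!)] · 2^j. -/
noncomputable def poch (a : ℂ) (n : ℕ) : ℂ := (ascPochhammer ℂ n).eval a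

/-- `n`-th Taylor coefficient at `0` of a function `f : ℂ → ℂ`. -/
noncomputable def taylorCoeff (f : ℂ → ℂ) (n : ℕ) : ℂ :=
  iteratedDeriv n f 0 / (Nat.factorial n)

/-- Mittag-Leffler polynomial `g_n(σ)`, the `n`-th Taylor coefficient at `z = 0`
of `((1+z)/(1-z))^σ`. -/
noncomputable def mittagLeffler (n : ℕ) (σ : ℂ) : ℂ :=
  taylorCoeff (fun z => ((1 + z) / (1 - z)) ^ σ) n

open Complex Metric Filter Set

open Finset in
/-- falling factorial of σ -/
noncomputable def mlU (σ : ℂ) (k : ℕ) : ℂ := (descPochhammer ℂ k).eval σ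

noncomputable def mlB (σ : ℂ) (k : ℕ) : ℂ := mlU σ k / (Nat.factorial k)

open Finset in
noncomputable def mlS (σ : ℂ) (n : ℕ) : ℂ :=
  ∑ j ∈ range n, 2 ^ (j+1) * ((n-1).choose j : ℂ) * mlB σ (j+1)

lemma mlU_zero (σ : ℂ) : mlU σ 0 = 1 := by simp [mlU]

lemma mlU_succ (σ : ℂ) (k : ℕ) : mlU σ (k+1) = mlU σ k * (σ - k) := by
  simp [mlU, descPochhammer_succ_eval]

lemma mlB_key (σ : ℂ) (k : ℕ) : σ * mlB σ (k+1) = (k+2) * mlB σ (k+2) + (k+1) * mlB σ (k+1) := by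
  have h1 : (Nat.factorial (k+1) : ℂ) ≠ 0 := Nat.cast_ne_zero.2 (Nat.factorial_ne_zero _)
  have h2 : (Nat.factorial (k+2) : ℂ) ≠ 0 := Nat.cast_ne_zero.2 (Nat.factorial_ne_zero _)
  have hu : mlU σ (k+2) = mlU σ (k+1) * (σ - (k+1)) := by
    simpa using mlU_succ σ (k+1)
  have hf : (Nat.factorial (k+2) : ℂ) = (k+2) * Nat.factorial (k+1) := by
    rw [Nat.factorial_succ]; push_cast; ring
  simp only [mlB]
  rw [hu, hf]
  have hc : ((k:ℂ)+2) ≠ 0 := by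
    have : (0:ℝ) < k + 2 := by positivity
    intro h
    exact absurd (congrArg Complex.re h) (by simp; positivity)
  have key : ((k:ℂ)+2) * (mlU σ (k+1) * (σ - ((k:ℂ)+1)) / (((k:ℂ)+2) * ((Nat.factorial (k+1)):ℂ))) =
      mlU σ (k+1) * (σ - ((k:ℂ)+1)) / ((Nat.factorial (k+1)):ℂ) := by
    rw [mul_div_assoc', mul_div_mul_left _ _ hc]
  rw [key, mul_div_assoc', mul_div_assoc', ← add_div, div_eq_div_iff h1 h1]
  ring

lemma poch_two (j : ℕ) : poch 2 j = (Nat.factorial (j+1) : ℂ) := by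
  induction j with
  | zero => simp [poch]
  | succ k ih =>
    rw [poch, ascPochhammer_succ_eval, ← poch, ih, Nat.factorial_succ (k+1)]
    push_cast; ring

lemma poch_one_sub_nat (n j : ℕ) (hj : j < n) :
    poch (1 - (n : ℂ)) j = (-1)^j * ((n-1).descFactorial j : ℂ) := by
  induction j with
  | zero => simp [poch]
  | succ k ih =>
    have hk : k < n := Nat.lt_of_succ_lt hj
    rw [poch, ascPochhammer_succ_eval, ← poch, ih hk, Nat.descFactorial_succ]
    have hkn : k ≤ n - 1 := by omega
    have hcast : ((n - 1 - k : ℕ) : ℂ) = (n : ℂ) - 1 - k := by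
      have : ((n - 1 - k : ℕ) : ℂ) = ((n-1 : ℕ) : ℂ) - (k : ℂ) := by
        push_cast [Nat.cast_sub hkn]; ring
      rw [this]
      have : ((n - 1 : ℕ) : ℂ) = (n : ℂ) - 1 := by
        have hn : 1 ≤ n := by omega
        push_cast [Nat.cast_sub hn]; ring
      rw [this]
    push_cast
    rw [hcast]
    ring

lemma poch_one_sub_sigma (σ : ℂ) (j : ℕ) :
    σ * poch (1 - σ) j = (-1)^j * mlU σ (j+1) := by
  induction j with
  | zero => simp [poch, mlU_succ, mlU_zero]
  | succ k ih =>
    rw [poch, ascPochhammer_succ_eval, ← poch]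
    have := mlU_succ σ (k+1)
    rw [pow_succ, show mlU σ (k+1+1) = mlU σ (k+1) * (σ - (k+1)) from by simpa using this]
    push_cast
    linear_combination (1 - σ + k) * ih

open Finset in
noncomputable def mlT (σ : ℂ) (p : ℕ) : ℂ :=
  ∑ j ∈ range (p+1), 2 ^ (j+1) * (p.choose j : ℂ) * mlB σ (j+1)

lemma chooseC (m j : ℕ) :
    ((m:ℂ)+2)*(Nat.choose (m+1) (j+1) : ℂ) =
      ((j:ℂ)+2)*(Nat.choose m j : ℂ) + 2*((j:ℂ)+2)*(Nat.choose m (j+1) : ℂ)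
        + (m:ℂ)*(Nat.choose (m-1) (j+1) : ℂ) := by
  cases m with
  | zero =>
    cases j with
    | zero => simp
    | succ i => simp [Nat.choose_eq_zero_of_lt]
  | succ k =>
    have f3 := congrArg (Nat.cast : ℕ → ℂ) (Nat.add_one_mul_choose_eq (k+2) (j+1))
    have f1 := congrArg (Nat.cast : ℕ → ℂ) (Nat.add_one_mul_choose_eq k (j+1))
    have pa := congrArg (Nat.cast : ℕ → ℂ) (Nat.choose_succ_succ (k+2) (j+1))
    have pb := congrArg (Nat.cast : ℕ → ℂ) (Nat.choose_succ_succ (k+1) j)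
    have pc := congrArg (Nat.cast : ℕ → ℂ) (Nat.choose_succ_succ (k+1) (j+1))
    push_cast at f3 f1 pa pb pc ⊢
    linear_combination f3 + ((j:ℂ)+2)*(pa + pb + pc) - f1

lemma mlT_expand (σ : ℂ) (j : ℕ) (c : ℂ) :
    2*σ*(2^(j+1)*c*mlB σ (j+1)) =
      2^(j+2)*((j:ℂ)+2)*c*mlB σ (j+2) + 2^(j+2)*((j:ℂ)+1)*c*mlB σ (j+1) := by
  linear_combination (2^(j+2)*c) * mlB_key σ j

open Finset in
lemma mlT_rec (σ : ℂ) (p : ℕ) :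
    ((p:ℂ)+3) * mlT σ (p+2) = 2*σ*mlT σ (p+1) + ((p:ℂ)+1)*mlT σ p := by
  simp only [mlT]
  rw [Finset.mul_sum, Finset.mul_sum, Finset.mul_sum]
  have hmid : ∑ j ∈ range (p+1+1), 2*σ*(2^(j+1)*((p+1).choose j:ℂ)*mlB σ (j+1)) =
      ∑ j ∈ range (p+2), (2^(j+2)*((j:ℂ)+2)*((p+1).choose j:ℂ)*mlB σ (j+2)
        + 2^(j+2)*((j:ℂ)+1)*((p+1).choose j:ℂ)*mlB σ (j+1)) :=
    Finset.sum_congr rfl (fun j _ => mlT_expand σ j _)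
  rw [hmid, Finset.sum_add_distrib]
  rw [Finset.sum_range_succ'
    (fun j => ((p:ℂ)+3)*(2^(j+1)*(((p+2).choose j : ℕ):ℂ)*mlB σ (j+1))) (p+2)]
  rw [Finset.sum_range_succ'
    (fun j => 2^(j+2)*((j:ℂ)+1)*(((p+1).choose j : ℕ):ℂ)*mlB σ (j+1)) (p+1)]
  rw [Finset.sum_range_succ'
    (fun j => ((p:ℂ)+1)*(2^(j+1)*((p.choose j : ℕ):ℂ)*mlB σ (j+1))) p]
  have ext1 : ∑ k ∈ range (p+1+1),
        2^(k+1+2)*(((k+1 : ℕ):ℂ)+1)*(((p+1).choose (k+1) : ℕ):ℂ)*mlB σ (k+1+1)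
      = ∑ k ∈ range (p+1),
        2^(k+1+2)*(((k+1 : ℕ):ℂ)+1)*(((p+1).choose (k+1) : ℕ):ℂ)*mlB σ (k+1+1) := by
    rw [Finset.sum_range_succ, Nat.choose_eq_zero_of_lt (by omega)]
    simp
  have ext2 : ∑ k ∈ range (p+2),
        ((p:ℂ)+1)*(2^(k+1+1)*((p.choose (k+1) : ℕ):ℂ)*mlB σ (k+1+1))
      = ∑ k ∈ range p,
        ((p:ℂ)+1)*(2^(k+1+1)*((p.choose (k+1) : ℕ):ℂ)*mlB σ (k+1+1)) := by
    rw [Finset.sum_range_succ, Finset.sum_range_succ, Nat.choose_eq_zero_of_lt (by omega),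
      Nat.choose_eq_zero_of_lt (by omega)]
    simp
  rw [← ext1, ← ext2]
  have total : ∑ k ∈ range (p+2),
        ((p:ℂ)+3)*(2^(k+1+1)*(((p+2).choose (k+1) : ℕ):ℂ)*mlB σ (k+1+1))
      = ∑ k ∈ range (p+2),
        (2^(k+2)*((k:ℂ)+2)*(((p+1).choose k : ℕ):ℂ)*mlB σ (k+2)
          + 2^(k+1+2)*(((k+1 : ℕ):ℂ)+1)*(((p+1).choose (k+1) : ℕ):ℂ)*mlB σ (k+1+1)
          + ((p:ℂ)+1)*(2^(k+1+1)*((p.choose (k+1) : ℕ):ℂ)*mlB σ (k+1+1))) := by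
    refine Finset.sum_congr rfl (fun k _ => ?_)
    have h := chooseC (p+1) k
    push_cast at h ⊢
    linear_combination (2^(k+2)*mlB σ (k+2)) * h
  rw [total, Finset.sum_add_distrib, Finset.sum_add_distrib]
  simp only [Nat.choose_zero_right, Nat.cast_one, Nat.cast_zero]
  push_cast
  ring

open Finset in
lemma rhs_eq_mlT (σ : ℂ) (n : ℕ) (hn : 1 ≤ n) :
    2 * σ * ∑ j ∈ Finset.range n,
        poch (1 - (n : ℂ)) j * poch (1 - σ) j / (poch 2 j * (Nat.factorial j)) * 2 ^ j
      = mlT σ (n-1) := by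
  rw [mlT, Nat.sub_add_cancel hn, Finset.mul_sum]
  refine Finset.sum_congr rfl (fun j hj => ?_)
  have hjn : j < n := Finset.mem_range.1 hj
  have h1 : ((Nat.factorial j : ℕ):ℂ) ≠ 0 := Nat.cast_ne_zero.2 (Nat.factorial_ne_zero _)
  have h2 : ((Nat.factorial (j+1) : ℕ):ℂ) ≠ 0 := Nat.cast_ne_zero.2 (Nat.factorial_ne_zero _)
  have hdf : (((n-1).descFactorial j : ℕ):ℂ)
      = ((Nat.factorial j : ℕ):ℂ) * (((n-1).choose j : ℕ):ℂ) := by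
    rw [← Nat.cast_mul, Nat.descFactorial_eq_factorial_mul_choose]
  have hs := poch_one_sub_sigma σ j
  rw [poch_two, poch_one_sub_nat n j hjn, hdf, mlB]
  have hsq : ((-1:ℂ))^j * (-1)^j = 1 := by
    rw [← pow_add, ← two_mul, pow_mul]
    norm_num
  field_simp
  linear_combination (2 * (-1:ℂ)^j * (((n-1).choose j : ℕ):ℂ) * 2^j) * hs
    + ((((n-1).choose j : ℕ):ℂ) * 2^(j+1) * mlU σ (j+1)) * hsq

lemma mlT_zero (σ : ℂ) : mlT σ 0 = 2*σ := by
  simp [mlT, mlB, mlU_succ, mlU_zero]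

lemma mlT_rec0 (σ : ℂ) : (2:ℂ) * mlT σ 1 = 2*σ*mlT σ 0 := by
  simp only [mlT, Finset.sum_range_succ, Finset.sum_range_zero]
  simp [Nat.choose]
  linear_combination (-4) * mlB_key σ 0

-- transfer within/global iterated derivs on open sets
lemma itd_of_isOpen {s : Set ℂ} {f : ℂ → ℂ} (hs : IsOpen s) {z : ℂ} (hz : z ∈ s) (n : ℕ) :
    iteratedDerivWithin n f s z = iteratedDeriv n f z := by
  rw [iteratedDerivWithin_eq_iteratedFDerivWithin, iteratedDeriv_eq_iteratedFDeriv,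
    iteratedFDerivWithin_of_isOpen n hs hz]

lemma itd_add {s : Set ℂ} {u v : ℂ → ℂ} (hs : IsOpen s) (hu : AnalyticOnNhd ℂ u s)
    (hv : AnalyticOnNhd ℂ v s) (n : ℕ) {z : ℂ} (hz : z ∈ s) :
    iteratedDeriv n (fun w => u w + v w) z = iteratedDeriv n u z + iteratedDeriv n v z := by
  rw [← itd_of_isOpen hs hz, ← itd_of_isOpen hs hz, ← itd_of_isOpen hs hz]
  exact iteratedDerivWithin_add hz hs.uniqueDiffOn
    (hu.contDiffOn hs.uniqueDiffOn z hz) (hv.contDiffOn hs.uniqueDiffOn z hz)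

lemma itd_const_mul {s : Set ℂ} {u : ℂ → ℂ} (hs : IsOpen s) (hu : AnalyticOnNhd ℂ u s)
    (c : ℂ) (n : ℕ) {z : ℂ} (hz : z ∈ s) :
    iteratedDeriv n (fun w => c * u w) z = c * iteratedDeriv n u z := by
  rw [← itd_of_isOpen hs hz, ← itd_of_isOpen hs hz]
  exact iteratedDerivWithin_const_mul hz hs.uniqueDiffOn c (hu.contDiffOn hs.uniqueDiffOn z hz)

lemma an_itd {s : Set ℂ} {g : ℂ → ℂ} (hs : IsOpen s) (hg : AnalyticOnNhd ℂ g s) (n : ℕ) :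
    AnalyticOnNhd ℂ (iteratedDeriv n g) s := by
  induction n with
  | zero => simpa [iteratedDeriv_zero] using hg
  | succ k ih => rw [iteratedDeriv_succ]; exact ih.deriv_of_isOpen hs

lemma itd_shift {s : Set ℂ} {g : ℂ → ℂ} (hs : IsOpen s) (hg : AnalyticOnNhd ℂ g s) :
    ∀ n : ℕ, ∀ z ∈ s, iteratedDeriv (n+1) (fun w => w * g w) z
      = ((n:ℂ)+1) * iteratedDeriv n g z + z * iteratedDeriv (n+1) g z := by
  intro n
  induction n with
  | zero =>
    intro z hz
    have hg' : HasDerivAt g (deriv g z) z := ((hg z hz).differentiableAt).hasDerivAt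
    have h : HasDerivAt (fun w => w * g w) (1 * g z + z * deriv g z) z := by
      exact (hasDerivAt_id' z).mul hg'
    rw [iteratedDeriv_one, h.deriv]
    simp [iteratedDeriv_zero, iteratedDeriv_one]
  | succ k ih =>
    intro z hz
    have hev : (iteratedDeriv (k+1) (fun w => w * g w)) =ᶠ[nhds z]
        (fun w => ((k:ℂ)+1) * iteratedDeriv k g w + w * iteratedDeriv (k+1) g w) :=
      eventually_of_mem (hs.mem_nhds hz) (fun w hw => ih w hw)
    rw [iteratedDeriv_succ, hev.deriv_eq]
    have hk : HasDerivAt (iteratedDeriv k g) (iteratedDeriv (k+1) g z) z := by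
      have := ((an_itd hs hg k z hz).differentiableAt).hasDerivAt
      rwa [← iteratedDeriv_succ] at this
    have hk1 : HasDerivAt (iteratedDeriv (k+1) g) (iteratedDeriv (k+2) g z) z := by
      have := ((an_itd hs hg (k+1) z hz).differentiableAt).hasDerivAt
      rwa [← iteratedDeriv_succ] at this
    have h : HasDerivAt (fun w => ((k:ℂ)+1) * iteratedDeriv k g w + w * iteratedDeriv (k+1) g w)
        (((k:ℂ)+1) * iteratedDeriv (k+1) g z
          + (1 * iteratedDeriv (k+1) g z + z * iteratedDeriv (k+2) g z)) z := by
      have h2 : HasDerivAt (fun w => w * iteratedDeriv (k+1) g w)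
          (1 * iteratedDeriv (k+1) g z + z * iteratedDeriv (k+2) g z) z := by
        exact (hasDerivAt_id' z).mul hk1
      exact (hk.const_mul _).add h2
    rw [h.deriv]
    push_cast
    ring

noncomputable def mlF (σ : ℂ) : ℂ → ℂ := fun z => ((1 + z) / (1 - z)) ^ σ

lemma ml_ball_facts {z : ℂ} (hz : z ∈ ball (0:ℂ) 1) :
    (1 - z) ≠ 0 ∧ (1 + z) ≠ 0 ∧ (1+z)/(1-z) ∈ slitPlane := by
  rw [mem_ball_zero_iff] at hz
  have habs : ‖z‖ < 1 := hz
  have hsq : z.re*z.re + z.im*z.im < 1 := by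
    have h1 : Complex.normSq z = z.re*z.re + z.im*z.im := Complex.normSq_apply z
    have h2 : Complex.normSq z = ‖z‖ ^ 2 := (Complex.sq_norm z).symm
    nlinarith [norm_nonneg z]
  have h1z : (1 - z) ≠ 0 := by
    intro h
    have : z = 1 := by linear_combination -h
    rw [this] at habs; simp at habs
  have h2z : (1 + z) ≠ 0 := by
    intro h
    have : z = -1 := by linear_combination h
    rw [this] at habs; simp at habs
  refine ⟨h1z, h2z, Or.inl ?_⟩
  rw [Complex.div_re, ← add_div]
  apply div_pos
  · simp only [Complex.add_re, Complex.sub_re, Complex.add_im, Complex.sub_im,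
      Complex.one_re, Complex.one_im]
    nlinarith
  · exact Complex.normSq_pos.2 h1z

lemma mlF_analytic (σ : ℂ) : AnalyticOnNhd ℂ (mlF σ) (ball (0:ℂ) 1) := by
  intro z hz
  obtain ⟨h1z, h2z, hslit⟩ := ml_ball_facts hz
  exact AnalyticAt.cpow ((analyticAt_const.add analyticAt_id).div
    (analyticAt_const.sub analyticAt_id) h1z) analyticAt_const hslit

lemma mlF_key (σ : ℂ) : ∀ z ∈ ball (0:ℂ) 1,
    deriv (mlF σ) z = z * (z * deriv (mlF σ) z) + 2 * σ * mlF σ z := by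
  intro z hz
  obtain ⟨h1z, h2z, hslit⟩ := ml_ball_facts hz
  have hnum : HasDerivAt (fun w : ℂ => 1 + w) 1 z := by
    simpa using (hasDerivAt_id z).const_add 1
  have hden : HasDerivAt (fun w : ℂ => 1 - w) (-1) z := by
    simpa using (hasDerivAt_id z).const_sub 1
  have hgd : HasDerivAt (fun w : ℂ => (1 + w) / (1 - w))
      ((1 * (1 - z) - (1 + z) * (-1)) / (1 - z) ^ 2) z := hnum.div hden h1z
  have hF : HasDerivAt (mlF σ)
      (σ * ((1 + z) / (1 - z)) ^ (σ - 1) * ((1 * (1 - z) - (1 + z) * (-1)) / (1 - z) ^ 2)) z :=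
    hgd.cpow_const hslit
  have hw : (1+z)/(1-z) ≠ 0 := div_ne_zero h2z h1z
  have hcp : ((1+z)/(1-z)) ^ (σ - 1) * ((1+z)/(1-z)) = ((1+z)/(1-z)) ^ σ := by
    have h1 : ((1+z)/(1-z)) ^ (σ - 1) * ((1+z)/(1-z)) ^ (1:ℂ)
        = ((1+z)/(1-z)) ^ (σ - 1 + 1) := (Complex.cpow_add _ _ hw).symm
    rw [Complex.cpow_one] at h1
    rw [h1]
    norm_num
  have hfz : mlF σ z = ((1+z)/(1-z)) ^ (σ - 1) * ((1+z)/(1-z)) := by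
    rw [mlF, hcp]
  rw [hF.deriv, hfz]
  field_simp
  ring

noncomputable def mld (σ : ℂ) (n : ℕ) : ℂ := iteratedDeriv n (mlF σ) 0

lemma mld_zero (σ : ℂ) : mld σ 0 = 1 := by
  rw [mld, iteratedDeriv_zero, mlF]
  norm_num

lemma mld_eq (σ : ℂ) (n : ℕ) : iteratedDeriv n (deriv (mlF σ)) 0 = mld σ (n+1) := by
  rw [mld, iteratedDeriv_succ']

lemma mld_main (σ : ℂ) (n : ℕ) :
    mld σ (n+1) = iteratedDeriv n (fun w => w * (w * deriv (mlF σ) w)) 0 + 2*σ*mld σ n := by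
  have hop : IsOpen (ball (0:ℂ) 1) := isOpen_ball
  have h0 : (0:ℂ) ∈ ball (0:ℂ) 1 := mem_ball_self one_pos
  have hFan : AnalyticOnNhd ℂ (deriv (mlF σ)) (ball 0 1) :=
    (mlF_analytic σ).deriv_of_isOpen hop
  have hWan : AnalyticOnNhd ℂ (fun w => w * (w * deriv (mlF σ) w)) (ball 0 1) :=
    fun z hz => analyticAt_id.mul (analyticAt_id.mul (hFan z hz))
  have hev : deriv (mlF σ) =ᶠ[nhds 0]
      (fun w => w * (w * deriv (mlF σ) w) + 2*σ*mlF σ w) :=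
    eventually_of_mem (hop.mem_nhds h0) (fun w hw => mlF_key σ w hw)
  rw [← mld_eq, hev.iteratedDeriv_eq n]
  rw [itd_add hop hWan (fun z hz => show AnalyticAt ℂ (fun w => 2*σ*mlF σ w) z from analyticAt_const.mul (mlF_analytic σ z hz)) n h0]
  rw [itd_const_mul hop (mlF_analytic σ) (2*σ) n h0]
  rfl

lemma mld_one (σ : ℂ) : mld σ 1 = 2*σ := by
  have h := mld_main σ 0
  rw [iteratedDeriv_zero, mld_zero] at h
  simpa using h

lemma mld_two (σ : ℂ) : mld σ 2 = 2*σ*mld σ 1 := by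
  have hop : IsOpen (ball (0:ℂ) 1) := isOpen_ball
  have h0 : (0:ℂ) ∈ ball (0:ℂ) 1 := mem_ball_self one_pos
  have hFan : AnalyticOnNhd ℂ (deriv (mlF σ)) (ball 0 1) :=
    (mlF_analytic σ).deriv_of_isOpen hop
  have hgan : AnalyticOnNhd ℂ (fun w => w * deriv (mlF σ) w) (ball 0 1) :=
    fun z hz => analyticAt_id.mul (hFan z hz)
  have h := mld_main σ 1
  rw [itd_shift hop hgan 0 0 h0] at h
  simpa using h

lemma mld_rec (σ : ℂ) (m : ℕ) :
    mld σ (m+3) = ((m:ℂ)+2)*((m:ℂ)+1)*mld σ (m+1) + 2*σ*mld σ (m+2) := by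
  have hop : IsOpen (ball (0:ℂ) 1) := isOpen_ball
  have h0 : (0:ℂ) ∈ ball (0:ℂ) 1 := mem_ball_self one_pos
  have hFan : AnalyticOnNhd ℂ (deriv (mlF σ)) (ball 0 1) :=
    (mlF_analytic σ).deriv_of_isOpen hop
  have hgan : AnalyticOnNhd ℂ (fun w => w * deriv (mlF σ) w) (ball 0 1) :=
    fun z hz => analyticAt_id.mul (hFan z hz)
  have h := mld_main σ (m+2)
  rw [itd_shift hop hgan (m+1) 0 h0] at h
  rw [itd_shift hop hFan m 0 h0, mld_eq] at h
  rw [h]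
  push_cast
  ring

lemma tc_eq (σ : ℂ) (k : ℕ) : taylorCoeff (mlF σ) k = mld σ k / (Nat.factorial k : ℂ) := rfl

lemma tc_claim (σ : ℂ) : ∀ m : ℕ, taylorCoeff (mlF σ) (m+1) = mlT σ m := by
  have key : ∀ m : ℕ, taylorCoeff (mlF σ) (m+1) = mlT σ m
      ∧ taylorCoeff (mlF σ) (m+2) = mlT σ (m+1) := by
    intro m
    induction m with
    | zero =>
      constructor
      · rw [tc_eq, mld_one, mlT_zero]
        norm_num
      · rw [tc_eq, mld_two, mld_one]
        have h := mlT_rec0 σ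
        rw [mlT_zero] at h
        norm_num [Nat.factorial]
        linear_combination -h/2
    | succ k ih =>
      refine ⟨ih.2, ?_⟩
      have h1 := ih.1
      have h2 := ih.2
      have hne1 : ((Nat.factorial (k+1) : ℕ):ℂ) ≠ 0 := Nat.cast_ne_zero.2 (Nat.factorial_ne_zero _)
      have hne2 : ((Nat.factorial (k+2) : ℕ):ℂ) ≠ 0 := Nat.cast_ne_zero.2 (Nat.factorial_ne_zero _)
      have hne3 : ((Nat.factorial (k+3) : ℕ):ℂ) ≠ 0 := Nat.cast_ne_zero.2 (Nat.factorial_ne_zero _)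
      rw [tc_eq, div_eq_iff hne1] at h1
      rw [tc_eq, div_eq_iff hne2] at h2
      have hr := mld_rec σ k
      have ht := mlT_rec σ k
      have hf2 : ((Nat.factorial (k+2) : ℕ):ℂ) = ((k:ℂ)+2)*((Nat.factorial (k+1) : ℕ):ℂ) := by
        rw [Nat.factorial_succ]; push_cast; ring
      have hf3 : ((Nat.factorial (k+3) : ℕ):ℂ) = ((k:ℂ)+3)*((Nat.factorial (k+2) : ℕ):ℂ) := by
        rw [Nat.factorial_succ (k+2)]; push_cast; ring
      have hgoal : taylorCoeff (mlF σ) (k+1+2) = mld σ (k+3) / ((Nat.factorial (k+3) : ℕ):ℂ) := rfl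
      rw [hgoal, div_eq_iff hne3]
      linear_combination hr + ((k:ℂ)+2)*((k:ℂ)+1)*h1 + 2*σ*h2
        - ((Nat.factorial (k+2):ℕ):ℂ)*ht - mlT σ (k+2)*hf3 - (((k:ℂ)+1)*mlT σ k)*hf2
  exact fun m => (key m).1

theorem mittagLeffler_formula (σ : ℂ) :
    mittagLeffler 0 σ = 1 ∧
    ∀ n : ℕ, 1 ≤ n →
      mittagLeffler n σ =
        2 * σ * ∑ j ∈ Finset.range n,
          poch (1 - (n : ℂ)) j * poch (1 - σ) j / (poch 2 j * (Nat.factorial j)) * 2 ^ j := by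
  constructor
  · have h : mittagLeffler 0 σ = taylorCoeff (mlF σ) 0 := rfl
    rw [h, tc_eq, mld_zero]
    norm_num
  · intro n hn
    obtain ⟨m, rfl⟩ : ∃ m, n = m + 1 := ⟨n-1, by omega⟩
    have h : mittagLeffler (m+1) σ = taylorCoeff (mlF σ) (m+1) := rfl
    rw [h, tc_claim σ m, rhs_eq_mlT σ (m+1) hn]
    norm_num
end

section
/- Let τ, ρ ∈ ℂ and s ∈ ℂ, and define g_n(τ, ρ, s) = ((ρ)_n / n!) · ∑_{j=0}^{n} [(-n)_j (τ)_j / ((ρ)_j j!)] s^j (assuming (ρ)_j ≠ 0 for j ≤ n). Then for complex z with |z| < 1 and |z(1-s)| < 1, (1-z)^{τ-ρ} (1 - (1-s)z)^{-τ} = ∑_{n=0}^∞ g_n(τ, ρ, s) z^n. -/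
/-- The Gauss hypergeometric polynomial coefficient
`g_n(τ, ρ, s) = ((ρ)_n / n!) · F(-n, τ; ρ; s)`. -/
noncomputable def gaussPoly (n : ℕ) (τ ρ s : ℂ) : ℂ :=
  poch ρ n / (Nat.factorial n) *
    ∑ j ∈ Finset.range (n + 1),
      poch (-(n : ℂ)) j * poch τ j / (poch ρ j * (Nat.factorial j)) * s ^ j

lemma poch_zero (a : ℂ) : poch a 0 = 1 := by simp [poch]

lemma poch_succ (a : ℂ) (n : ℕ) : poch a (n+1) = poch a n * (a + n) := by
  simp [poch, ascPochhammer_succ_right]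

lemma poch_add (a : ℂ) (m k : ℕ) : poch a (m + k) = poch a m * poch (a + m) k := by
  induction k with
  | zero => simp [poch_zero]
  | succ k ih => rw [← Nat.add_assoc, poch_succ, ih, poch_succ]; push_cast; ring

lemma poch_vandermonde (a b : ℂ) (N : ℕ) :
    poch (a + b) N = ∑ m ∈ Finset.range (N+1), (N.choose m : ℂ) * poch a m * poch b (N - m) := by
  induction N with
  | zero => simp [poch_zero]
  | succ N ih =>
    rw [poch_succ, ih, Finset.sum_mul]
    have key : ∀ m ∈ Finset.range (N+1),
        (N.choose m : ℂ) * poch a m * poch b (N - m) * (a + b + N)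
        = (N.choose m : ℂ) * poch a (m+1) * poch b (N - m)
          + (N.choose m : ℂ) * poch a m * poch b (N - m + 1) := by
      intro m hm
      rw [Finset.mem_range] at hm
      have hm' : m ≤ N := Nat.lt_succ_iff.mp hm
      have : (a + b + N) = (a + m) + (b + (N - m : ℕ)) := by
        have : ((N - m : ℕ) : ℂ) = (N : ℂ) - m := by
          push_cast [Nat.cast_sub hm']; ring
        rw [this]; ring
      rw [this, poch_succ, poch_succ]; ring
    rw [Finset.sum_congr rfl key, Finset.sum_add_distrib]
    rw [Finset.sum_range_succ' (fun m => (((N+1).choose m : ℂ)) * poch a m * poch b (N+1-m)) (N+1)]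
    have h1 : ∀ m ∈ Finset.range (N+1),
        (((N+1).choose (m+1) : ℂ)) * poch a (m+1) * poch b (N+1-(m+1))
        = (N.choose m : ℂ) * poch a (m+1) * poch b (N - m)
          + (N.choose (m+1) : ℂ) * poch a (m+1) * poch b (N - m) := by
      intro m hm
      have : N+1-(m+1) = N - m := by omega
      rw [this, Nat.choose_succ_succ]
      push_cast; ring
    rw [Finset.sum_congr rfl h1, Finset.sum_add_distrib]
    have h2 : ∑ m ∈ Finset.range (N+1), (N.choose m : ℂ) * poch a m * poch b (N - m + 1)
        = (∑ m ∈ Finset.range (N+1), (N.choose (m+1) : ℂ) * poch a (m+1) * poch b (N - m))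
          + poch b (N+1) := by
      rw [Finset.sum_range_succ' (fun m => (N.choose m : ℂ) * poch a m * poch b (N - m + 1)) N,
        Finset.sum_range_succ (fun m => (N.choose (m+1) : ℂ) * poch a (m+1) * poch b (N - m)) N]
      have h3 : ∀ m ∈ Finset.range N,
          (N.choose (m+1) : ℂ) * poch a (m+1) * poch b (N - (m+1) + 1)
          = (N.choose (m+1) : ℂ) * poch a (m+1) * poch b (N - m) := by
        intro m hm
        rw [Finset.mem_range] at hm
        have : N - (m+1) + 1 = N - m := by omega
        rw [this]
      rw [Finset.sum_congr rfl h3]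
      simp [poch_zero, Nat.choose_succ_self]
    rw [h2]
    simp [poch_zero]
    ring

lemma mem_slit (x : ℂ) (hx : ‖x‖ < 1) : 1 - x ∈ Complex.slitPlane := by
  rw [Complex.mem_slitPlane_iff]
  left
  have : |x.re| ≤ ‖x‖ := Complex.abs_re_le_norm x
  simp only [Complex.sub_re, Complex.one_re]
  have := abs_le.mp this
  linarith

lemma iteratedDeriv_one_sub_cpow (a : ℂ) (n : ℕ) :
    ∀ x : ℂ, 1 - x ∈ Complex.slitPlane →
      iteratedDeriv n (fun y => (1 - y) ^ (-a)) x = poch a n * (1 - x) ^ (-a - n) := by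
  induction n with
  | zero => intro x hx; simp [poch_zero, iteratedDeriv_zero]
  | succ n ih =>
    intro x hx
    rw [iteratedDeriv_succ]
    have hopen : IsOpen {y : ℂ | 1 - y ∈ Complex.slitPlane} :=
      Complex.isOpen_slitPlane.preimage (by continuity)
    have hev : iteratedDeriv n (fun y => (1 - y) ^ (-a))
        =ᶠ[nhds x] fun y => poch a n * (1 - y) ^ (-a - n) := by
      filter_upwards [hopen.mem_nhds hx] with y hy using ih y hy
    rw [hev.deriv_eq]
    have hd : HasDerivAt (fun y : ℂ => (1 - y) ^ (-a - n))
        ((-a - n) * (1 - x) ^ (-a - n - 1) * (-1)) x := by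
      have h1 : HasDerivAt (fun y : ℂ => 1 - y) (-1) x := by
        simpa using ((hasDerivAt_id x).const_sub 1)
      exact h1.cpow_const hx
    rw [deriv_const_mul _ hd.differentiableAt, hd.deriv, poch_succ]
    rw [show -a - n - 1 = -a - (n+1 : ℕ) by push_cast; ring]
    push_cast
    ring

lemma hasSum_binomial (a x : ℂ) (hx : ‖x‖ < 1) :
    HasSum (fun n : ℕ => poch a n / (Nat.factorial n : ℂ) * x ^ n) ((1 - x) ^ (-a)) := by
  have hdiff : DifferentiableOn ℂ (fun y : ℂ => (1 - y) ^ (-a)) (Metric.ball (0:ℂ) 1) := by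
    intro y hy
    refine DifferentiableAt.differentiableWithinAt ?_
    have h1 : HasDerivAt (fun y : ℂ => 1 - y) (-1) y := by
      simpa using ((hasDerivAt_id y).const_sub 1)
    exact (h1.cpow_const (mem_slit y (by simpa using hy))).differentiableAt
  have hmem : x ∈ Metric.ball (0:ℂ) 1 := by simpa using hx
  have H := Complex.hasSum_taylorSeries_on_ball hdiff hmem
  have heq : (fun n : ℕ => poch a n / (Nat.factorial n : ℂ) * x ^ n)
      = fun n : ℕ => (Nat.factorial n : ℂ)⁻¹ • (x - 0) ^ n •
          iteratedDeriv n (fun y => (1 - y) ^ (-a)) 0 := by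
    funext n
    rw [iteratedDeriv_one_sub_cpow a n 0 (by simpa using mem_slit 0 (by simp))]
    simp only [smul_eq_mul, sub_zero, Complex.one_cpow, mul_one]
    ring
  rw [heq]
  exact H

lemma poch_real_cast (u : ℝ) (n : ℕ) :
    poch (u : ℂ) n = (((ascPochhammer ℝ n).eval u : ℝ) : ℂ) := by
  induction n with
  | zero => simp [poch]
  | succ n ih =>
    rw [poch_succ, ih, ascPochhammer_succ_right]
    simp only [Polynomial.eval_mul, Polynomial.eval_add, Polynomial.eval_X,
      Polynomial.eval_natCast]
    push_cast
    ring

lemma poch_real_nonneg (u : ℝ) (hu : 0 ≤ u) (n : ℕ) : 0 ≤ (ascPochhammer ℝ n).eval u := by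
  induction n with
  | zero => simp
  | succ n ih =>
    rw [ascPochhammer_succ_right]
    simp only [Polynomial.eval_mul, Polynomial.eval_add, Polynomial.eval_X,
      Polynomial.eval_natCast]
    positivity

lemma norm_poch_le (a : ℂ) (n : ℕ) :
    ‖poch a n‖ ≤ (ascPochhammer ℝ n).eval (‖a‖ + 1) := by
  induction n with
  | zero => simp [poch_zero]
  | succ n ih =>
    rw [poch_succ, ascPochhammer_succ_right]
    simp only [Polynomial.eval_mul, Polynomial.eval_add, Polynomial.eval_X,
      Polynomial.eval_natCast]
    rw [norm_mul]
    have h1 : ‖a + (n : ℂ)‖ ≤ ‖a‖ + 1 + n := by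
      calc ‖a + (n : ℂ)‖ ≤ ‖a‖ + ‖(n : ℂ)‖ := norm_add_le _ _
      _ ≤ ‖a‖ + 1 + n := by simp
    exact mul_le_mul ih h1 (norm_nonneg _) (poch_real_nonneg _ (by positivity) n)

lemma summable_norm_binomial (a x : ℂ) (hx : ‖x‖ < 1) :
    Summable (fun n : ℕ => ‖poch a n / (Nat.factorial n : ℂ) * x ^ n‖) := by
  set u : ℝ := ‖a‖ + 1 with hu
  have hb := (hasSum_binomial (u : ℂ) ((‖x‖ : ℝ) : ℂ) (by
    rw [Complex.norm_real]; simpa using hx)).summable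
  have hcast : (fun n : ℕ => poch (u:ℂ) n / (Nat.factorial n : ℂ) * ((‖x‖:ℝ):ℂ) ^ n)
      = fun n : ℕ => (((ascPochhammer ℝ n).eval u / (Nat.factorial n : ℝ) * ‖x‖ ^ n : ℝ) : ℂ) := by
    funext n
    rw [poch_real_cast]
    push_cast
    ring
  rw [hcast] at hb
  have hreal : Summable (fun n : ℕ => (ascPochhammer ℝ n).eval u / (Nat.factorial n : ℝ) * ‖x‖ ^ n) :=
    (Complex.summable_ofReal).mp hb
  refine Summable.of_nonneg_of_le (fun n => norm_nonneg _) (fun n => ?_) hreal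
  rw [norm_mul, norm_div, norm_pow]
  have h1 : ‖(Nat.factorial n : ℂ)‖ = (Nat.factorial n : ℝ) := by
    simp [Complex.norm_natCast]
  rw [h1]
  have h2 : (0:ℝ) < (Nat.factorial n : ℝ) := by positivity
  gcongr
  exact norm_poch_le a n

lemma fac_ne (n : ℕ) : ((Nat.factorial n : ℂ)) ≠ 0 := by
  exact_mod_cast Nat.cast_ne_zero.mpr (Nat.factorial_ne_zero n)

lemma poch_neg_nat {n j : ℕ} (h : j ≤ n) :
    poch (-(n : ℂ)) j = (-1) ^ j * (Nat.factorial n : ℂ) / (Nat.factorial (n - j) : ℂ) := by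
  induction j with
  | zero => simp [poch_zero, div_self (fac_ne n)]
  | succ j ih =>
    have hj : j ≤ n := Nat.le_of_succ_le h
    obtain ⟨m, hm⟩ : ∃ m, n = j + m + 1 := ⟨n - (j+1), by omega⟩
    rw [poch_succ, ih hj, show n - j = m + 1 by omega, show n - (j+1) = m by omega]
    have h1 : -(n:ℂ) + j = -((m:ℂ) + 1) := by
      subst hm; push_cast; ring
    have h4 : ((m:ℂ) + 1) ≠ 0 := Nat.cast_add_one_ne_zero m
    have h5 : (Nat.factorial (m+1) : ℂ) = ((m:ℂ) + 1) * (Nat.factorial m : ℂ) := by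
      rw [Nat.factorial_succ]; push_cast; ring
    rw [h1, h5, pow_succ]
    field_simp

lemma poch_split (a : ℂ) {j n : ℕ} (h : j ≤ n) :
    poch a n = poch a j * poch (a + j) (n - j) := by
  conv_lhs => rw [show n = j + (n - j) by omega]
  exact poch_add a j (n - j)

lemma inner_vandermonde (a b : ℂ) (N : ℕ) :
    ∑ m ∈ Finset.range (N+1),
        poch a m * poch b (N-m) / ((Nat.factorial m : ℂ) * (Nat.factorial (N-m) : ℂ))
      = poch (a+b) N / (Nat.factorial N : ℂ) := by
  rw [poch_vandermonde, Finset.sum_div]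
  refine Finset.sum_congr rfl (fun m hm => ?_)
  rw [Finset.mem_range] at hm
  have hm' : m ≤ N := Nat.lt_succ_iff.mp hm
  have hC : ((N.choose m : ℂ)) * (Nat.factorial m : ℂ) * (Nat.factorial (N-m) : ℂ)
      = (Nat.factorial N : ℂ) := by
    exact_mod_cast congrArg (Nat.cast : ℕ → ℂ) (Nat.choose_mul_factorial_mul_factorial hm')
  rw [div_eq_div_iff (mul_ne_zero (fac_ne m) (fac_ne (N-m))) (fac_ne N)]
  linear_combination (-(poch a m * poch b (N-m))) * hC

lemma coeff_identity (τ ρ s : ℂ) (hρ : ∀ j : ℕ, poch ρ j ≠ 0) (n : ℕ) :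
    ∑ k ∈ Finset.range (n+1),
        (poch τ k / (Nat.factorial k : ℂ) * (1-s)^k)
          * (poch (ρ-τ) (n-k) / (Nat.factorial (n-k) : ℂ))
      = gaussPoly n τ ρ s := by
  classical
  set F : ℕ → ℕ → ℂ := fun k j =>
    poch τ k * (-s)^j * (k.choose j : ℂ) / (Nat.factorial k : ℂ)
      * (poch (ρ-τ) (n-k) / (Nat.factorial (n-k) : ℂ)) with hF
  have step1 : ∑ k ∈ Finset.range (n+1),
      (poch τ k / (Nat.factorial k : ℂ) * (1-s)^k)
        * (poch (ρ-τ) (n-k) / (Nat.factorial (n-k) : ℂ))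
      = ∑ k ∈ Finset.range (n+1), ∑ j ∈ Finset.range (k+1), F k j := by
    refine Finset.sum_congr rfl (fun k _ => ?_)
    have hpow : (1-s)^k = ∑ j ∈ Finset.range (k+1), (-s)^j * (k.choose j : ℂ) := by
      rw [show (1 : ℂ) - s = -s + 1 by ring, add_pow]
      simp
    rw [hpow, Finset.mul_sum, Finset.sum_mul]
    refine Finset.sum_congr rfl (fun j _ => ?_)
    rw [hF]
    ring
  have step2 : ∑ k ∈ Finset.range (n+1), ∑ j ∈ Finset.range (k+1), F k j
      = ∑ j ∈ Finset.range (n+1), ∑ k ∈ Finset.Ico j (n+1), F k j := by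
    have := (Finset.sum_Ico_Ico_comm 0 (n+1) (fun j k => F k j)).symm
    simpa [Nat.Ico_zero_eq_range] using this
  have step3 : ∀ j ∈ Finset.range (n+1),
      ∑ k ∈ Finset.Ico j (n+1), F k j
        = poch τ j * (-s)^j / (Nat.factorial j : ℂ)
            * (poch (ρ+j) (n-j) / (Nat.factorial (n-j) : ℂ)) := by
    intro j hj
    rw [Finset.mem_range] at hj
    have hj' : j ≤ n := Nat.lt_succ_iff.mp hj
    rw [Finset.sum_Ico_eq_sum_range]
    have hN : n + 1 - j = (n - j) + 1 := by omega
    rw [hN]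
    have hterm : ∀ m ∈ Finset.range ((n-j)+1),
        F (j + m) j = poch τ j * (-s)^j / (Nat.factorial j : ℂ)
          * (poch (τ+j) m * poch (ρ-τ) ((n-j)-m)
              / ((Nat.factorial m : ℂ) * (Nat.factorial ((n-j)-m) : ℂ))) := by
      intro m hm
      rw [hF]
      have e1 : n - (j + m) = (n - j) - m := (Nat.sub_sub n j m).symm ▸ rfl
      have e2 : poch τ (j+m) = poch τ j * poch (τ + j) m := poch_add τ j m
      have e3 : (((j+m).choose j : ℂ)) * (Nat.factorial j : ℂ) * (Nat.factorial m : ℂ)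
          = (Nat.factorial (j+m) : ℂ) := by
        have := Nat.choose_mul_factorial_mul_factorial (Nat.le_add_right j m)
        rw [Nat.add_sub_cancel_left] at this
        exact_mod_cast congrArg (Nat.cast : ℕ → ℂ) this
      simp only [e1, e2]
      rw [div_mul_div_comm, div_mul_div_comm, div_eq_div_iff
        (mul_ne_zero (fac_ne (j+m)) (fac_ne ((n-j)-m)))
        (mul_ne_zero (fac_ne j) (mul_ne_zero (fac_ne m) (fac_ne ((n-j)-m))))]
      linear_combination (poch τ j * poch (τ + (j:ℂ)) m * (-s)^j * poch (ρ-τ) ((n-j)-m)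
        * (Nat.factorial ((n-j)-m) : ℂ)) * e3
    rw [Finset.sum_congr rfl hterm, ← Finset.mul_sum]
    congr 1
    rw [inner_vandermonde (τ+j) (ρ-τ) (n-j)]
    congr 2
    ring
  rw [step1, step2, Finset.sum_congr rfl step3, gaussPoly, Finset.mul_sum]
  refine Finset.sum_congr rfl (fun j hj => ?_)
  rw [Finset.mem_range] at hj
  have hj' : j ≤ n := Nat.lt_succ_iff.mp hj
  rw [poch_neg_nat hj', poch_split ρ hj', neg_pow]
  field_simp [hρ j]
  set c : ℂ := poch τ j * s ^ j * poch (ρ + (j:ℂ)) (n - j)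
    * ((Nat.factorial j : ℂ))⁻¹ * ((Nat.factorial (n-j) : ℂ))⁻¹ * (-1)^j with hc
  have h1 : poch ρ j * (poch ρ j)⁻¹ = 1 := mul_inv_cancel₀ (hρ j)
  have h2 : (Nat.factorial n : ℂ) * ((Nat.factorial n : ℂ))⁻¹ = 1 := mul_inv_cancel₀ (fac_ne n)
  rw [mul_div_mul_right _ _ (fac_ne n)]

theorem gaussPoly_generating_function (τ ρ s z : ℂ)
    (hρ : ∀ j : ℕ, poch ρ j ≠ 0) (hz : ‖z‖ < 1) (hzs : ‖z * (1 - s)‖ < 1) :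
    HasSum (fun n : ℕ => gaussPoly n τ ρ s * z ^ n)
      ((1 - z) ^ (τ - ρ) * (1 - (1 - s) * z) ^ (-τ)) := by
  have hzs' : ‖(1 - s) * z‖ < 1 := by rwa [mul_comm] at hzs
  set f : ℕ → ℂ := fun k => poch τ k / (Nat.factorial k : ℂ) * ((1-s)*z) ^ k with hf
  set g : ℕ → ℂ := fun k => poch (ρ-τ) k / (Nat.factorial k : ℂ) * z ^ k with hg
  have hfs := hasSum_binomial τ ((1-s)*z) hzs'
  have hgs := hasSum_binomial (ρ-τ) z hz
  have hfn := summable_norm_binomial τ ((1-s)*z) hzs'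
  have hgn := summable_norm_binomial (ρ-τ) z hz
  have H := hasSum_sum_range_mul_of_summable_norm hfn hgn
  rw [hfs.tsum_eq, hgs.tsum_eq] at H
  have hval : (1 - ((1-s)*z)) ^ (-τ) * (1 - z) ^ (-(ρ-τ))
      = (1 - z) ^ (τ - ρ) * (1 - (1 - s) * z) ^ (-τ) := by
    rw [neg_sub]
    ring
  rw [hval] at H
  have hterm : (fun n : ℕ => ∑ k ∈ Finset.range (n+1), f k * g (n-k))
      = fun n : ℕ => gaussPoly n τ ρ s * z ^ n := by
    funext n
    rw [← coeff_identity τ ρ s hρ n, Finset.sum_mul]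
    refine Finset.sum_congr rfl (fun k hk => ?_)
    rw [Finset.mem_range] at hk
    have hk' : k ≤ n := Nat.lt_succ_iff.mp hk
    rw [hf, hg]
    simp only
    have : ((1-s)*z) ^ k * z ^ (n-k) = (1-s)^k * z^n := by
      rw [mul_pow, mul_assoc, ← pow_add, Nat.add_sub_cancel' hk']
    calc poch τ k / (Nat.factorial k : ℂ) * ((1-s)*z) ^ k
          * (poch (ρ-τ) (n-k) / (Nat.factorial (n-k) : ℂ) * z ^ (n-k))
        = poch τ k / (Nat.factorial k : ℂ) * (poch (ρ-τ) (n-k) / (Nat.factorial (n-k) : ℂ))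
            * (((1-s)*z) ^ k * z ^ (n-k)) := by ring
      _ = poch τ k / (Nat.factorial k : ℂ) * (1-s)^k
            * (poch (ρ-τ) (n-k) / (Nat.factorial (n-k) : ℂ)) * z ^ n := by rw [this]; ring
  rwa [hterm] at H
end

section
/- For τ ∈ ℂ, η ∈ ℂ with 0 < |η| < 1, define Ĝ_n(τ, ρ, η) as the n-th Taylor coefficient at ζ = 0 of (1 + ηζ)^τ (1 + ζ/η)^{-τ} (1 - ζ²)^{-ρ}. Then Ĝ_n(τ, ρ, η) = (-1)^n ∑_{k=0}^{⌊n/2⌋} [(ρ)_k / k!] g_{n-2k}(τ, 0, (η²-1)/η²) η^{n-2k}, where g_m(τ, 0, s) is the m-th Taylor coefficient at z = 0 of (1-z)^τ (1-(1-s)z)^{-τ}. -/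
/-- `Ĝ_n(τ, ρ, η)`: `n`-th Taylor coefficient at `ζ = 0` of
`(1 + ηζ)^τ (1 + ζ/η)^{-τ} (1 - ζ²)^{-ρ}`. -/
noncomputable def Ghat (n : ℕ) (τ ρ η : ℂ) : ℂ :=
  taylorCoeff (fun ζ => (1 + η * ζ) ^ τ * (1 + ζ / η) ^ (-τ) * (1 - ζ ^ 2) ^ (-ρ)) n

/-- `g_m(τ, 0, s)`: `m`-th Taylor coefficient at `z = 0` of `(1-z)^τ (1-(1-s)z)^{-τ}`. -/
noncomputable def gPoly (m : ℕ) (τ s : ℂ) : ℂ :=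
  taylorCoeff (fun z => (1 - z) ^ τ * (1 - (1 - s) * z) ^ (-τ)) m


open Filter FormalMultilinearSeries
open scoped NNReal ENNReal

/-- `f` has Taylor coefficients `a` on the ball of radius `r` around `0`. -/
def HasCoeffs (f : ℂ → ℂ) (a : ℕ → ℂ) (r : ℝ) : Prop :=
  0 < r ∧ ∀ z : ℂ, ‖z‖ < r → HasSum (fun k => a k * z ^ k) (f z)

lemma HasCoeffs.congr_fun {f g : ℂ → ℂ} {a : ℕ → ℂ} {r : ℝ} (h : HasCoeffs f a r)
    (hfg : f = g) : HasCoeffs g a r := hfg ▸ h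

lemma HasCoeffs.radius_le {f : ℂ → ℂ} {a : ℕ → ℂ} {r : ℝ} (h : HasCoeffs f a r)
    {t : ℝ≥0} (ht : (t : ℝ) < r) : (t : ℝ≥0∞) ≤ (ofScalars ℂ a).radius := by
  obtain ⟨u, htu, hur⟩ := exists_between ht
  have hu0 : (0:ℝ) ≤ u := le_trans t.2 htu.le
  have hsum := (h.2 (u : ℂ) (by simpa [Complex.norm_real, abs_of_nonneg hu0] using hur)).summable
  have h0 := hsum.tendsto_atTop_zero.norm
  have hbdd : BddAbove (Set.range fun k => ‖a k * (u:ℂ) ^ k‖) := by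
    simpa using h0.bddAbove_range
  obtain ⟨C, hC⟩ := hbdd
  apply (ofScalars ℂ a).le_radius_of_bound C
  intro k
  have hnorm : ‖ofScalars ℂ a k‖ = ‖a k‖ := ofScalars_norm ℂ a k
  rw [hnorm]
  calc ‖a k‖ * (t:ℝ) ^ k ≤ ‖a k‖ * u ^ k := by
        gcongr
    _ = ‖a k * (u:ℂ) ^ k‖ := by
        rw [norm_mul, norm_pow, Complex.norm_real, Real.norm_eq_abs, abs_of_nonneg hu0]
    _ ≤ C := hC ⟨k, rfl⟩

lemma HasCoeffs.hasFPowerSeriesOnBall {f : ℂ → ℂ} {a : ℕ → ℂ} {r : ℝ} (h : HasCoeffs f a r)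
    {t : ℝ≥0} (ht0 : 0 < t) (ht : (t : ℝ) < r) :
    HasFPowerSeriesOnBall f (ofScalars ℂ a) 0 t where
  r_le := h.radius_le ht
  r_pos := by exact_mod_cast ht0
  hasSum := by
    intro y hy
    rw [mem_emetric_ball_zero_iff] at hy
    have hy' : ‖y‖ < r := lt_trans (by exact_mod_cast hy) ht
    simp only [FormalMultilinearSeries.ofScalars_apply_eq, smul_eq_mul, zero_add]
    exact h.2 y hy'

lemma HasCoeffs.taylorCoeff_eq {f : ℂ → ℂ} {a : ℕ → ℂ} {r : ℝ} (h : HasCoeffs f a r)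
    (n : ℕ) : taylorCoeff f n = a n := by
  have h2 : (0:ℝ) < r / 2 := by linarith [h.1]
  have hb := h.hasFPowerSeriesOnBall (t := ⟨r / 2, h2.le⟩) (by exact_mod_cast h2)
    (by simpa using by linarith [h.1] : ((⟨r/2, h2.le⟩ : NNReal) : ℝ) < r)
  have key := hb.factorial_smul 1 n
  have h1 : (ofScalars ℂ a n fun _ => (1:ℂ)) = a n := by
    rw [FormalMultilinearSeries.ofScalars_apply_eq]; simp
  rw [h1, ← iteratedDeriv_eq_iteratedFDeriv] at key
  rw [taylorCoeff, ← key, nsmul_eq_mul]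
  field_simp [Nat.factorial_ne_zero]

lemma HasCoeffs.summable_norm {f : ℂ → ℂ} {a : ℕ → ℂ} {r : ℝ} (h : HasCoeffs f a r)
    {z : ℂ} (hz : ‖z‖ < r) : Summable fun k => ‖a k * z ^ k‖ := by
  obtain ⟨u, hzu, hur⟩ := exists_between hz
  have hu0 : (0:ℝ) ≤ u := le_trans (norm_nonneg z) hzu.le
  have hrad : (‖z‖₊ : ℝ≥0∞) < (ofScalars ℂ a).radius := by
    refine lt_of_lt_of_le ?_ (h.radius_le (t := ⟨u, hu0⟩) hur)
    exact ENNReal.coe_lt_coe.mpr (NNReal.coe_lt_coe.mp hzu)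
  have := (ofScalars ℂ a).summable_norm_mul_pow hrad
  simp only [ofScalars_norm] at this
  simpa [norm_mul, norm_pow, coe_nnnorm] using this

lemma HasCoeffs.mul {f g : ℂ → ℂ} {a b : ℕ → ℂ} {r r' : ℝ}
    (hf : HasCoeffs f a r) (hg : HasCoeffs g b r') :
    HasCoeffs (fun z => f z * g z)
      (fun n => ∑ k ∈ Finset.range (n + 1), a k * b (n - k)) (min r r') := by
  refine ⟨lt_min hf.1 hg.1, fun z hz => ?_⟩
  have hzr : ‖z‖ < r := lt_of_lt_of_le hz (min_le_left _ _)
  have hzr' : ‖z‖ < r' := lt_of_lt_of_le hz (min_le_right _ _)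
  have hfs := hf.summable_norm hzr
  have hgs := hg.summable_norm hzr'
  have hsummable := summable_norm_sum_mul_range_of_summable_norm hfs hgs
  have hcauchy := tsum_mul_tsum_eq_tsum_sum_range_of_summable_norm hfs hgs
  rw [(hf.2 z hzr).tsum_eq, (hg.2 z hzr').tsum_eq] at hcauchy
  have hS : Summable fun n => ∑ k ∈ Finset.range (n + 1),
      (a k * z ^ k) * (b (n - k) * z ^ (n - k)) := hsummable.of_norm
  have := hS.hasSum
  rw [← hcauchy] at this
  have hfun : (fun n => (∑ k ∈ Finset.range (n + 1), a k * b (n - k)) * z ^ n)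
      = fun n => ∑ k ∈ Finset.range (n + 1), (a k * z ^ k) * (b (n - k) * z ^ (n - k)) := by
    funext n
    rw [Finset.sum_mul]
    refine Finset.sum_congr rfl fun k hk => ?_
    have hk' : k ≤ n := Nat.lt_succ_iff.mp (Finset.mem_range.mp hk)
    rw [mul_mul_mul_comm, ← pow_add, Nat.add_sub_cancel' hk']
  rw [hfun]
  exact this

lemma HasCoeffs.comp_const_mul {f : ℂ → ℂ} {a : ℕ → ℂ} {r : ℝ} (h : HasCoeffs f a r)
    {c : ℂ} (hc : c ≠ 0) :
    HasCoeffs (fun z => f (c * z)) (fun k => a k * c ^ k) (r / ‖c‖) := by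
  refine ⟨div_pos h.1 (norm_pos_iff.mpr hc), fun z hz => ?_⟩
  have hcz : ‖c * z‖ < r := by
    rw [norm_mul]
    rw [lt_div_iff₀ (norm_pos_iff.mpr hc)] at hz
    linarith [hz]
  have := h.2 (c * z) hcz
  simpa [mul_pow, mul_comm, mul_assoc, mul_left_comm] using this

lemma HasCoeffs.comp_sq {f : ℂ → ℂ} {a : ℕ → ℂ} {r : ℝ} (h : HasCoeffs f a r) :
    HasCoeffs (fun z => f (z ^ 2))
      (fun n => if 2 ∣ n then a (n / 2) else 0) (min r 1) := by
  refine ⟨lt_min h.1 one_pos, fun z hz => ?_⟩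
  have hz1 : ‖z‖ < 1 := lt_of_lt_of_le hz (min_le_right _ _)
  have hzr : ‖z‖ < r := lt_of_lt_of_le hz (min_le_left _ _)
  have h2 : ‖z ^ 2‖ < r := by
    rw [norm_pow, sq]
    nlinarith [norm_nonneg z]
  have hs := h.2 (z ^ 2) h2
  have hinj : Function.Injective (fun k : ℕ => 2 * k) := fun x y hxy => by
    have hxy' : 2 * x = 2 * y := hxy
    omega
  rw [← Function.Injective.hasSum_iff hinj ?_]
  · have hfun : ((fun n => (if 2 ∣ n then a (n / 2) else 0) * z ^ n) ∘ fun k => 2 * k)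
        = fun k => a k * (z ^ 2) ^ k := by
      funext k
      simp [Function.comp, Nat.dvd_mul_right, Nat.mul_div_cancel_left, ← pow_mul]
    rw [hfun]
    exact hs
  · intro n hn
    have : ¬ (2 ∣ n) := by
      intro ⟨m, hm⟩
      exact hn ⟨m, by show 2 * m = n; omega⟩
    simp [this]

lemma AnalyticAt.exists_hasCoeffs {f : ℂ → ℂ} (h : AnalyticAt ℂ f 0) :
    ∃ r : ℝ, HasCoeffs f (taylorCoeff f) r := by
  obtain ⟨p, rr, hp⟩ := h
  obtain ⟨t, ht0, htr⟩ := ENNReal.lt_iff_exists_nnreal_btwn.1 hp.r_pos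
  have ht0' : (0:ℝ) < t := by exact_mod_cast ht0
  have hc : HasCoeffs f (fun n => p.coeff n) t := by
    refine ⟨ht0', fun z hz => ?_⟩
    have hz' : z ∈ Metric.eball (0:ℂ) rr := by
      rw [mem_emetric_ball_zero_iff]
      calc (‖z‖₊ : ℝ≥0∞) < (t : ℝ≥0∞) := by exact_mod_cast hz
        _ < rr := htr
    have := hp.hasSum hz'
    rw [zero_add] at this
    refine (funext fun k : ℕ => ?_ :
      (fun k => (p k) fun _ => z) = fun k => p.coeff k * z ^ k) ▸ this
    rw [FormalMultilinearSeries.apply_eq_pow_smul_coeff, smul_eq_mul, mul_comm]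
  have heq : (fun n => p.coeff n) = taylorCoeff f := by
    funext n
    exact (hc.taylorCoeff_eq n).symm
  exact ⟨t, heq ▸ hc⟩

lemma one_sub_mem_slitPlane {w : ℂ} (hw : ‖w‖ < 1) : 1 - w ∈ Complex.slitPlane := by
  rw [Complex.mem_slitPlane_iff]
  left
  have : |w.re| ≤ ‖w‖ := Complex.abs_re_le_norm w
  simp only [Complex.sub_re, Complex.one_re]
  have := abs_le.mp this
  linarith

lemma iteratedDeriv_one_sub_cpow_s11 (ρ : ℂ) :
    ∀ k : ℕ, ∀ w : ℂ, ‖w‖ < 1 →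
      iteratedDeriv k (fun w => (1 - w) ^ (-ρ)) w = poch ρ k * (1 - w) ^ (-ρ - k) := by
  intro k
  induction k with
  | zero =>
    intro w hw
    simp [poch, ascPochhammer_zero, iteratedDeriv_zero]
  | succ k ih =>
    intro w hw
    rw [iteratedDeriv_succ]
    have hmem : Metric.ball (0:ℂ) 1 ∈ nhds w := by
      apply Metric.isOpen_ball.mem_nhds
      simpa [Metric.mem_ball, dist_zero_right] using hw
    have hev : iteratedDeriv k (fun w => (1 - w) ^ (-ρ))
        =ᶠ[nhds w] fun w => poch ρ k * (1 - w) ^ (-ρ - k) := by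
      filter_upwards [hmem] with x hx
      exact ih x (by simpa [Metric.mem_ball, dist_zero_right] using hx)
    rw [hev.deriv_eq]
    have hslit : ((1:ℂ) - w) ∈ Complex.slitPlane := one_sub_mem_slitPlane hw
    have hbase : HasDerivAt (fun w : ℂ => 1 - w) (-1) w := by
      simpa using (hasDerivAt_id w).const_sub (1:ℂ)
    have hd : HasDerivAt (fun w : ℂ => (1 - w) ^ (-ρ - k))
        ((-ρ - k) * (1 - w) ^ (-ρ - k - 1) * (-1)) w :=
      HasDerivAt.cpow_const hbase hslit
    rw [deriv_const_mul _ hd.differentiableAt, hd.deriv]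
    have hexp : (-ρ - (k:ℂ) - 1) = -ρ - ((k:ℕ) + 1 : ℕ) := by push_cast; ring
    rw [hexp]
    have hpoch : poch ρ (k + 1) = poch ρ k * (ρ + k) := by
      simp [poch, ascPochhammer_succ_eval]
    rw [hpoch]
    ring

lemma taylorCoeff_one_sub_cpow (ρ : ℂ) (k : ℕ) :
    taylorCoeff (fun w => (1 - w) ^ (-ρ)) k = poch ρ k / (Nat.factorial k) := by
  rw [taylorCoeff, iteratedDeriv_one_sub_cpow_s11 ρ k 0 (by simp)]
  simp [Complex.one_cpow]

theorem Ghat_eq_sum (n : ℕ) (τ ρ η : ℂ) (hη0 : η ≠ 0) (hη1 : ‖η‖ < 1) :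
    Ghat n τ ρ η =
      (-1 : ℂ) ^ n * ∑ k ∈ Finset.range (n / 2 + 1),
        poch ρ k / (Nat.factorial k) * gPoly (n - 2 * k) τ ((η ^ 2 - 1) / η ^ 2) *
          η ^ (n - 2 * k) := by
  set s : ℂ := (η ^ 2 - 1) / η ^ 2 with hs
  have hη2 : (η : ℂ) ^ 2 ≠ 0 := pow_ne_zero _ hη0
  -- analyticity of the `g` generating function
  have hGa : AnalyticAt ℂ (fun z : ℂ => (1 - z) ^ τ * (1 - (1 - s) * z) ^ (-τ)) 0 := by
    apply AnalyticAt.mul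
    · exact AnalyticAt.cpow (analyticAt_const.sub analyticAt_id) analyticAt_const (by simp)
    · exact AnalyticAt.cpow (analyticAt_const.sub (analyticAt_const.mul analyticAt_id))
        analyticAt_const (by simp)
  obtain ⟨rG, hG⟩ := hGa.exists_hasCoeffs
  have hGg : HasCoeffs (fun z : ℂ => (1 - z) ^ τ * (1 - (1 - s) * z) ^ (-τ))
      (fun m => gPoly m τ s) rG := hG
  -- rescale to get the first two factors
  have hFc := hGg.comp_const_mul (c := -η) (by simpa using hη0)
  rw [norm_neg] at hFc
  have h1s : (1 : ℂ) - s = 1 / η ^ 2 := by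
    rw [hs]
    field_simp
    ring
  have hF : HasCoeffs (fun ζ : ℂ => (1 + η * ζ) ^ τ * (1 + ζ / η) ^ (-τ))
      (fun k => gPoly k τ s * (-η) ^ k) (rG / ‖η‖) := by
    refine hFc.congr_fun ?_
    funext ζ
    show ((1 : ℂ) - -η * ζ) ^ τ * ((1 : ℂ) - (1 - s) * (-η * ζ)) ^ (-τ)
        = (1 + η * ζ) ^ τ * (1 + ζ / η) ^ (-τ)
    have h1 : (1 : ℂ) - -η * ζ = 1 + η * ζ := by ring
    have h2 : (1 : ℂ) - (1 - s) * (-η * ζ) = 1 + ζ / η := by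
      rw [h1s]
      field_simp
      ring
    rw [h1, h2]
  -- binomial factor
  have hBa : AnalyticAt ℂ (fun w : ℂ => (1 - w) ^ (-ρ)) 0 :=
    AnalyticAt.cpow (analyticAt_const.sub analyticAt_id) analyticAt_const (by simp)
  obtain ⟨rB, hB⟩ := hBa.exists_hasCoeffs
  have hB' : HasCoeffs (fun w : ℂ => (1 - w) ^ (-ρ))
      (fun k => poch ρ k / (Nat.factorial k)) rB := by
    have heq : taylorCoeff (fun w : ℂ => (1 - w) ^ (-ρ))
        = fun k => poch ρ k / (Nat.factorial k) := funext (taylorCoeff_one_sub_cpow ρ)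
    exact heq ▸ hB
  have hR := hB'.comp_sq
  -- the product
  have hprod := hR.mul hF
  have hGhat : HasCoeffs
      (fun ζ : ℂ => (1 + η * ζ) ^ τ * (1 + ζ / η) ^ (-τ) * (1 - ζ ^ 2) ^ (-ρ))
      (fun m => ∑ j ∈ Finset.range (m + 1),
        (if 2 ∣ j then poch ρ (j / 2) / (Nat.factorial (j / 2)) else 0) *
          (gPoly (m - j) τ s * (-η) ^ (m - j)))
      (min (min rB 1) (rG / ‖η‖)) :=
    hprod.congr_fun (funext fun ζ => mul_comm _ _)
  have hmain := hGhat.taylorCoeff_eq n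
  rw [Ghat]
  rw [hmain]
  -- reindex the Cauchy sum over even indices
  have hsum : ∀ u v : ℕ → ℂ,
      (∑ j ∈ Finset.range (n + 1), (if 2 ∣ j then u (j / 2) else 0) * v j)
        = ∑ k ∈ Finset.range (n / 2 + 1), u k * v (2 * k) := by
    intro u v
    simp only [ite_mul, zero_mul]
    rw [← Finset.sum_filter]
    refine Finset.sum_nbij' (i := fun j => j / 2) (j := fun k => 2 * k) ?_ ?_ ?_ ?_ ?_
    · intro j hj
      simp only [Finset.mem_filter, Finset.mem_range] at hj ⊢
      omega
    · intro k hk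
      simp only [Finset.mem_filter, Finset.mem_range] at hk ⊢
      omega
    · intro j hj
      simp only [Finset.mem_filter, Finset.mem_range] at hj
      show 2 * (j / 2) = j
      omega
    · intro k hk
      show 2 * k / 2 = k
      omega
    · intro j hj
      simp only [Finset.mem_filter, Finset.mem_range] at hj
      have h2j : 2 * (j / 2) = j := by omega
      rw [h2j]
  have hre := hsum (fun k => poch ρ k / (Nat.factorial k))
    (fun j => gPoly (n - j) τ s * (-η) ^ (n - j))
  rw [show (∑ j ∈ Finset.range (n + 1),
      (if 2 ∣ j then poch ρ (j / 2) / (Nat.factorial (j / 2)) else 0) *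
        (gPoly (n - j) τ s * (-η) ^ (n - j)))
      = ∑ k ∈ Finset.range (n / 2 + 1),
        poch ρ k / (Nat.factorial k) * (gPoly (n - 2 * k) τ s * (-η) ^ (n - 2 * k)) from hre]
  rw [Finset.mul_sum]
  refine Finset.sum_congr rfl fun k hk => ?_
  have h2k : 2 * k ≤ n := by
    simp only [Finset.mem_range] at hk
    omega
  have hneg : (-η : ℂ) ^ (n - 2 * k) = (-1) ^ n * η ^ (n - 2 * k) := by
    rw [neg_pow]
    congr 1
    conv_rhs => rw [← Nat.sub_add_cancel h2k]
    rw [pow_add, pow_mul]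
    simp
  rw [hneg]
  ring
end

section
/- Let n ∈ ℕ, τ ∈ ℂ with λ = n + τ ≠ 0 and |τ(1-τ)/λ| < 1. Let w: [0,∞) → ℂ solve the initial value problem w'' + 2λ w' - τ(1-τ) sech²(α) · w = 0 with w(0) = f₀ = (1+(-1)^n)/2 and w'(0) = λ f₁ where f₁ = (1-(-1)^n)/λ - f₀. Then for all α ≥ 0, |w(α) - f₁(1 - e^{-2λα})/2 - f₀| ≤ |τ(1-τ)/λ| · tanh(α) · B_n(τ) / (1 - |τ(1-τ)/λ|), where B_n(τ) = 2 if n is even and B_n(τ) = 2/|n+τ| if n is odd. (Assume Re λ ≥ 0 so that |1 - e^{-2λ(α-s)}| ≤ 2 for 0 ≤ s ≤ α.) -/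
open Set intervalIntegral MeasureTheory

set_option maxHeartbeats 1000000

private lemma exp_deriv' (c : ℂ) (x : ℝ) :
    HasDerivAt (fun y : ℝ => Complex.exp (c * ↑y)) (c * Complex.exp (c * ↑x)) x := by
  have h : HasDerivAt (fun z : ℂ => Complex.exp (c * z)) (c * Complex.exp (c * ↑x)) (x : ℝ) := by
    simpa [mul_comm] using ((hasDerivAt_id (x:ℂ)).const_mul c).cexp
  exact h.comp_ofReal

private lemma tanh_deriv' (x : ℝ) : HasDerivAt Real.tanh (1 / Real.cosh x ^ 2) x := by
  have h : HasDerivAt (fun y => Real.sinh y / Real.cosh y) (1 / Real.cosh x ^ 2) x := by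
    have := (Real.hasDerivAt_sinh x).div (Real.hasDerivAt_cosh x) (Real.cosh_pos x).ne'
    convert this using 1
    all_goals try rfl
    have h2 := Real.cosh_sq_sub_sinh_sq x
    rw [div_eq_div_iff (by positivity) (by positivity)]
    nlinarith [Real.cosh_pos x]
  have : Real.tanh = fun y => Real.sinh y / Real.cosh y := funext fun y => Real.tanh_eq_sinh_div_cosh y
  rw [this]; exact h

private lemma ftc' (f : ℝ → ℂ) (hf : Continuous f) (b : ℝ) :
    HasDerivAt (fun u => ∫ x in (0:ℝ)..u, f x) (f b) b :=
  intervalIntegral.integral_hasDerivAt_right (hf.intervalIntegrable _ _)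
    (hf.stronglyMeasurableAtFilter _ _) hf.continuousAt

theorem volterra_ode_estimate (n : ℕ) (τ : ℂ)
    (hlam : (n : ℂ) + τ ≠ 0)
    (hsmall : ‖τ * (1 - τ) / ((n : ℂ) + τ)‖ < 1)
    (hre : 0 ≤ ((n : ℂ) + τ).re)
    (w w' w'' : ℝ → ℂ)
    (hw : ∀ α : ℝ, HasDerivAt w (w' α) α)
    (hw' : ∀ α : ℝ, HasDerivAt w' (w'' α) α)
    (hode : ∀ α : ℝ, 0 ≤ α →
      w'' α + 2 * ((n : ℂ) + τ) * w' α -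
        τ * (1 - τ) / ((Real.cosh α : ℂ)) ^ 2 * w α = 0)
    (hw0 : w 0 = (1 + (-1 : ℂ) ^ n) / 2)
    (hw'0 : w' 0 = ((n : ℂ) + τ) *
      ((1 - (-1 : ℂ) ^ n) / ((n : ℂ) + τ) - (1 + (-1 : ℂ) ^ n) / 2)) :
    ∀ α : ℝ, 0 ≤ α →
      ‖w α - ((1 - (-1 : ℂ) ^ n) / ((n : ℂ) + τ) - (1 + (-1 : ℂ) ^ n) / 2) *
            (1 - Complex.exp (-2 * ((n : ℂ) + τ) * α)) / 2 -
          (1 + (-1 : ℂ) ^ n) / 2‖ ≤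
        ‖τ * (1 - τ) / ((n : ℂ) + τ)‖ * Real.tanh α *
          (if Even n then 2 else 2 / ‖(n : ℂ) + τ‖) /
          (1 - ‖τ * (1 - τ) / ((n : ℂ) + τ)‖) := by
  set l : ℂ := (n : ℂ) + τ with hldef
  set μ : ℂ := τ * (1 - τ) with hmudef
  set f0 : ℂ := (1 + (-1 : ℂ) ^ n) / 2 with hf0def
  set f1 : ℂ := (1 - (-1 : ℂ) ^ n) / l - f0 with hf1def
  -- basic continuity facts
  have hwc : Continuous w := continuous_iff_continuousAt.2 fun x => (hw x).continuousAt
  have hw'c : Continuous w' := continuous_iff_continuousAt.2 fun x => (hw' x).continuousAt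
  have hcoshne : ∀ s : ℝ, ((Real.cosh s : ℂ)) ^ 2 ≠ 0 := fun s =>
    pow_ne_zero _ (by exact_mod_cast (Real.cosh_pos s).ne')
  set K : ℝ → ℂ := fun s => w s / (Real.cosh s : ℂ) ^ 2 with hKdef
  have hKc : Continuous K := by
    apply hwc.div ((Complex.continuous_ofReal.comp Real.continuous_cosh).pow 2) hcoshne
  have hEc : ∀ c : ℂ, Continuous fun x : ℝ => Complex.exp (c * ↑x) := fun c =>
    Complex.continuous_exp.comp (continuous_const.mul Complex.continuous_ofReal)
  have hJic : Continuous fun s : ℝ => Complex.exp (2 * l * ↑s) * K s := (hEc _).mul hKc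
  set J : ℝ → ℂ := fun a => ∫ s in (0:ℝ)..a, Complex.exp (2 * l * ↑s) * K s with hJdef
  set I : ℝ → ℂ := fun a => ∫ s in (0:ℝ)..a, K s with hIdef
  have hJd : ∀ a : ℝ, HasDerivAt J (Complex.exp (2 * l * ↑a) * K a) a := fun a =>
    ftc' _ hJic a
  have hId : ∀ a : ℝ, HasDerivAt I (K a) a := fun a => ftc' _ hKc a
  have hJcont : Continuous J := continuous_iff_continuousAt.2 fun x => (hJd x).continuousAt
  have hIcont : Continuous I := continuous_iff_continuousAt.2 fun x => (hId x).continuousAt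
  have hode' : ∀ a : ℝ, 0 ≤ a → w'' a = μ * K a - 2 * l * w' a := by
    intro a ha
    have h := hode a ha
    have hc := hcoshne a
    field_simp [hKdef] at h ⊢
    linear_combination h
  -- Step A: first integration
  have hveq : ∀ a : ℝ, 0 ≤ a →
      Complex.exp (2 * l * ↑a) * w' a = l * f1 + μ * J a := by
    intro a ha
    set φ : ℝ → ℂ := fun x => Complex.exp (2 * l * ↑x) * w' x - μ * J x with hφdef
    have hconst : ∀ x ∈ Icc (0:ℝ) a, φ x = φ 0 := by
      apply constant_of_has_deriv_right_zero
      · exact (((hEc (2*l)).mul hw'c).sub (continuous_const.mul hJcont)).continuousOn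
      · intro x hx
        have hx0 : (0:ℝ) ≤ x := hx.1
        have hd : HasDerivAt φ
            ((2 * l * Complex.exp (2 * l * ↑x)) * w' x + Complex.exp (2 * l * ↑x) * w'' x
              - μ * (Complex.exp (2 * l * ↑x) * K x)) x :=
          ((exp_deriv' (2*l) x).mul (hw' x)).sub ((hJd x).const_mul μ)
        have hz : (2 * l * Complex.exp (2 * l * ↑x)) * w' x + Complex.exp (2 * l * ↑x) * w'' x
              - μ * (Complex.exp (2 * l * ↑x) * K x) = 0 := by
          rw [hode' x hx0]; ring
        rw [hz] at hd
        exact hd.hasDerivWithinAt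
    have h0 : φ 0 = l * f1 := by
      simp [hφdef, hJdef, intervalIntegral.integral_same, hw'0, hf1def, hf0def]
    have ha' := hconst a ⟨ha, le_refl a⟩
    rw [h0] at ha'
    have : Complex.exp (2 * l * ↑a) * w' a - μ * J a = l * f1 := ha'
    linear_combination this
  -- Step B: second integration
  have hweq : ∀ a : ℝ, 0 ≤ a →
      w a - f1 * (1 - Complex.exp (-2 * l * ↑a)) / 2 - f0 =
        μ / (2 * l) * (I a - Complex.exp (-2 * l * ↑a) * J a) := by
    intro a ha
    set ψ : ℝ → ℂ := fun x => w x - (f1 * (1 - Complex.exp (-2 * l * ↑x)) / 2 + f0) -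
        μ / (2 * l) * (I x - Complex.exp (-2 * l * ↑x) * J x) with hψdef
    have hconst : ∀ x ∈ Icc (0:ℝ) a, ψ x = ψ 0 := by
      apply constant_of_has_deriv_right_zero
      · exact ((hwc.sub ((((continuous_const.mul (continuous_const.sub (hEc (-2*l)))).div_const
            2).add continuous_const))).sub (continuous_const.mul (hIcont.sub
            ((hEc (-2*l)).mul hJcont)))).continuousOn
      · intro x hx
        have hx0 : (0:ℝ) ≤ x := hx.1
        have hE := exp_deriv' (-2*l) x
        have hd : HasDerivAt ψ
            (w' x - (f1 * (0 - -2 * l * Complex.exp (-2 * l * ↑x)) / 2 + 0) -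
              μ / (2 * l) * (K x - ((-2 * l * Complex.exp (-2 * l * ↑x)) * J x +
                Complex.exp (-2 * l * ↑x) * (Complex.exp (2 * l * ↑x) * K x)))) x := by
          refine ((hw x).sub ?_).sub (HasDerivAt.const_mul _ ((hId x).sub (hE.mul (hJd x))))
          exact (((hasDerivAt_const x (1:ℂ)).sub hE).const_mul f1 |>.div_const 2).add
            (hasDerivAt_const x f0)
        have hmul : Complex.exp (-2 * l * ↑x) * Complex.exp (2 * l * ↑x) = 1 := by
          rw [← Complex.exp_add]
          norm_num
        have hv := hveq x hx0
        have hz : w' x - (f1 * (0 - -2 * l * Complex.exp (-2 * l * ↑x)) / 2 + 0) -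
              μ / (2 * l) * (K x - ((-2 * l * Complex.exp (-2 * l * ↑x)) * J x +
                Complex.exp (-2 * l * ↑x) * (Complex.exp (2 * l * ↑x) * K x))) = 0 := by
          have h2l : (2:ℂ) * l ≠ 0 := mul_ne_zero two_ne_zero hlam
          have hinv : μ / (2 * l) * (2 * l) = μ := div_mul_cancel₀ μ h2l
          linear_combination Complex.exp (-2 * l * ↑x) * hv +
            (μ / (2 * l) * K x - w' x) * hmul - Complex.exp (-2 * l * ↑x) * J x * hinv
        rw [hz] at hd
        exact hd.hasDerivWithinAt
    have h0 : ψ 0 = 0 := by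
      simp [hψdef, hIdef, hJdef, intervalIntegral.integral_same, hw0]
    have ha' := hconst a ⟨ha, le_refl a⟩
    rw [h0] at ha'
    have : w a - (f1 * (1 - Complex.exp (-2 * l * ↑a)) / 2 + f0) -
        μ / (2 * l) * (I a - Complex.exp (-2 * l * ↑a) * J a) = 0 := ha'
    linear_combination this
  -- norm facts
  have hn2 : ‖(2:ℂ)‖ = 2 := by norm_num
  have hexpnorm : ∀ x : ℝ, 0 ≤ x → ‖Complex.exp (-2 * l * ↑x)‖ ≤ 1 := by
    intro x hx
    rw [Complex.norm_exp, Real.exp_le_one_iff]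
    have hre' : (-2 * l * (↑x:ℂ)).re = -2 * l.re * x := by
      simp [Complex.mul_re]
    rw [hre']; nlinarith
  have h1subexp : ∀ x : ℝ, 0 ≤ x → ‖(1:ℂ) - Complex.exp (-2 * l * ↑x)‖ ≤ 2 := by
    intro x hx
    calc ‖(1:ℂ) - Complex.exp (-2 * l * ↑x)‖ ≤ ‖(1:ℂ)‖ + ‖Complex.exp (-2 * l * ↑x)‖ :=
          norm_sub_le _ _
      _ ≤ 1 + 1 := by rw [norm_one]; exact add_le_add_right (hexpnorm x hx) 1
      _ = 2 := by norm_num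
  have hqhalf : ‖μ / (2 * l)‖ = ‖μ / l‖ / 2 := by
    rw [show μ / (2 * l) = μ / l / 2 by rw [div_div, mul_comm], norm_div, hn2]
  have htanh_nonneg : ∀ x : ℝ, 0 ≤ x → 0 ≤ Real.tanh x := fun x hx => by
    rw [Real.tanh_eq_sinh_div_cosh]
    have h1 : Real.exp (-x) ≤ Real.exp x := Real.exp_le_exp.2 (by linarith)
    have h2 : Real.sinh x = (Real.exp x - Real.exp (-x)) / 2 := Real.sinh_eq x
    have h3 : 0 ≤ Real.sinh x := by rw [h2]; linarith
    exact div_nonneg h3 (Real.cosh_pos x).le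
  have htanh_le_one : ∀ x : ℝ, Real.tanh x ≤ 1 := fun x => by
    rw [Real.tanh_eq_sinh_div_cosh, div_le_one (Real.cosh_pos x)]
    have h := Real.cosh_sub_sinh x
    nlinarith [Real.exp_pos (-x)]
  -- Step C: the integral bound
  have hbound : ∀ a : ℝ, 0 ≤ a → ∀ C : ℝ, 0 ≤ C → (∀ s ∈ Icc (0:ℝ) a, ‖w s‖ ≤ C) →
      ‖μ / (2 * l) * (I a - Complex.exp (-2 * l * ↑a) * J a)‖ ≤
        ‖μ / l‖ * (C * Real.tanh a) := by
    intro a ha C hC hwC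
    have hker : ∀ s : ℝ, (1 - Complex.exp (-2 * l * (↑a - ↑s))) * K s =
        K s - Complex.exp (-2 * l * ↑a) * (Complex.exp (2 * l * ↑s) * K s) := by
      intro s
      have hE : Complex.exp (-2 * l * (↑a - ↑s)) =
          Complex.exp (-2 * l * ↑a) * Complex.exp (2 * l * ↑s) := by
        rw [← Complex.exp_add]; congr 1; ring
      rw [hE]; ring
    have hint1 : IntervalIntegrable K volume 0 a := hKc.intervalIntegrable _ _
    have hint2 : IntervalIntegrable
        (fun s => Complex.exp (-2 * l * ↑a) * (Complex.exp (2 * l * ↑s) * K s)) volume 0 a :=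
      (continuous_const.mul hJic).intervalIntegrable _ _
    have hIJ : (∫ s in (0:ℝ)..a, (1 - Complex.exp (-2 * l * (↑a - ↑s))) * K s) =
        I a - Complex.exp (-2 * l * ↑a) * J a := by
      rw [intervalIntegral.integral_congr
        (g := fun s => K s - Complex.exp (-2 * l * ↑a) * (Complex.exp (2 * l * ↑s) * K s))
        (fun s _ => hker s)]
      rw [intervalIntegral.integral_sub hint1 hint2, intervalIntegral.integral_const_mul]
    have hgint : IntervalIntegrable (fun s => 2 * C / Real.cosh s ^ 2) volume 0 a := by
      apply Continuous.intervalIntegrable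
      exact continuous_const.div (Real.continuous_cosh.pow 2)
        (fun s => pow_ne_zero _ (Real.cosh_pos s).ne')
    have hgval : (∫ s in (0:ℝ)..a, 2 * C / Real.cosh s ^ 2) = 2 * C * Real.tanh a := by
      have hds : ∀ s ∈ uIcc (0:ℝ) a, HasDerivAt (fun y => 2 * C * Real.tanh y)
          (2 * C / Real.cosh s ^ 2) s := fun s _ => by
        simpa [mul_one_div, div_eq_mul_inv] using (tanh_deriv' s).const_mul (2 * C)
      rw [intervalIntegral.integral_eq_sub_of_hasDerivAt hds hgint]
      simp [Real.tanh_zero]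
    have hXle : ‖∫ s in (0:ℝ)..a, (1 - Complex.exp (-2 * l * (↑a - ↑s))) * K s‖ ≤
        2 * C * Real.tanh a := by
      have h := intervalIntegral.norm_integral_le_abs_of_norm_le
        (f := fun s => (1 - Complex.exp (-2 * l * (↑a - ↑s))) * K s)
        (g := fun s => 2 * C / Real.cosh s ^ 2) (μ := volume) (a := (0:ℝ)) (b := a)
        ?_ hgint
      · rw [hgval] at h
        refine h.trans (le_of_eq (abs_of_nonneg ?_))
        have := htanh_nonneg a ha
        positivity
      · refine ae_restrict_of_forall_mem measurableSet_uIoc ?_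
        intro s hs
        rw [Set.uIoc_of_le ha] at hs
        have hs0 : (0:ℝ) ≤ s := hs.1.le
        have hsa : s ≤ a := hs.2
        have hKn : ‖K s‖ = ‖w s‖ / Real.cosh s ^ 2 := by
          simp only [hKdef]
          rw [norm_div, norm_pow, Complex.norm_real, Real.norm_eq_abs, abs_of_pos (Real.cosh_pos s)]
        have hEn : ‖(1:ℂ) - Complex.exp (-2 * l * (↑a - ↑s))‖ ≤ 2 := by
          have hcast : ((a:ℂ) - (s:ℂ)) = ((a - s : ℝ) : ℂ) := by push_cast; ring
          rw [hcast]
          exact h1subexp (a - s) (by linarith)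
        rw [norm_mul, hKn]
        have hws : ‖w s‖ ≤ C := hwC s ⟨hs0, hsa⟩
        have h2 : ‖w s‖ / Real.cosh s ^ 2 ≤ C / Real.cosh s ^ 2 := by gcongr
        calc ‖(1:ℂ) - Complex.exp (-2 * l * (↑a - ↑s))‖ * (‖w s‖ / Real.cosh s ^ 2)
            ≤ 2 * (C / Real.cosh s ^ 2) :=
              mul_le_mul hEn h2 (by positivity) (by norm_num)
          _ = 2 * C / Real.cosh s ^ 2 := by ring
    calc ‖μ / (2 * l) * (I a - Complex.exp (-2 * l * ↑a) * J a)‖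
        = ‖μ / (2 * l)‖ * ‖I a - Complex.exp (-2 * l * ↑a) * J a‖ := norm_mul _ _
      _ = ‖μ / l‖ / 2 * ‖∫ s in (0:ℝ)..a, (1 - Complex.exp (-2 * l * (↑a - ↑s))) * K s‖ := by
          rw [hqhalf, hIJ]
      _ ≤ ‖μ / l‖ / 2 * (2 * C * Real.tanh a) := by
          apply mul_le_mul_of_nonneg_left hXle (by positivity)
      _ = ‖μ / l‖ * (C * Real.tanh a) := by ring
  -- Step D: bootstrap
  set B : ℝ := if Even n then (2:ℝ) else 2 / ‖l‖ with hBdef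
  have hl0 : 0 < ‖l‖ := norm_pos_iff.2 hlam
  have hB0 : 0 ≤ B := by
    rw [hBdef]; split
    · norm_num
    · positivity
  have hw0B : ∀ s : ℝ, 0 ≤ s → ‖f1 * (1 - Complex.exp (-2 * l * ↑s)) / 2 + f0‖ ≤ B := by
    intro s hs
    have he := h1subexp s hs
    rcases Nat.even_or_odd n with hn | hn
    · have h1 : ((-1:ℂ)) ^ n = 1 := hn.neg_one_pow
      have hf0 : f0 = 1 := by rw [hf0def, h1]; norm_num
      have hf1 : f1 = -1 := by rw [hf1def, hf0, h1]; simp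
      have hBval : B = 2 := by rw [hBdef, if_pos hn]
      rw [hf1, hf0, hBval]
      calc ‖(-1:ℂ) * (1 - Complex.exp (-2 * l * ↑s)) / 2 + 1‖
          ≤ ‖(-1:ℂ) * (1 - Complex.exp (-2 * l * ↑s)) / 2‖ + ‖(1:ℂ)‖ := norm_add_le _ _
        _ = ‖(1:ℂ) - Complex.exp (-2 * l * ↑s)‖ / 2 + 1 := by
            rw [norm_one, norm_div, norm_mul, norm_neg, norm_one, one_mul, hn2]
        _ ≤ 2 / 2 + 1 := by gcongr
        _ = 2 := by norm_num
    · have h1 : ((-1:ℂ)) ^ n = -1 := hn.neg_one_pow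
      have hf0 : f0 = 0 := by rw [hf0def, h1]; norm_num
      have hf1 : f1 = 2 / l := by rw [hf1def, hf0, h1]; ring
      have hBval : B = 2 / ‖l‖ := by rw [hBdef, if_neg (Nat.not_even_iff_odd.mpr hn)]
      rw [hf1, hf0, hBval, add_zero]
      have hnn : ‖2 / l * (1 - Complex.exp (-2 * l * ↑s)) / 2‖ =
          2 / ‖l‖ * ‖(1:ℂ) - Complex.exp (-2 * l * ↑s)‖ / 2 := by
        rw [norm_div, norm_mul, norm_div, hn2]
      rw [hnn]
      calc 2 / ‖l‖ * ‖(1:ℂ) - Complex.exp (-2 * l * ↑s)‖ / 2 ≤ 2 / ‖l‖ * 2 / 2 := by gcongr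
        _ = 2 / ‖l‖ := by ring
  intro α hα
  set g : ℝ → ℂ := fun s => w s - f1 * (1 - Complex.exp (-2 * l * ↑s)) / 2 - f0 with hgdef
  have hgc : Continuous fun s => ‖g s‖ := by
    apply Continuous.norm
    exact (hwc.sub ((continuous_const.mul
      (continuous_const.sub (hEc (-2*l)))).div_const 2)).sub continuous_const
  obtain ⟨c, hc, hcmax'⟩ := isCompact_Icc.exists_isMaxOn ⟨0, left_mem_Icc.2 hα⟩ hgc.continuousOn
  have hcmax : ∀ y ∈ Icc (0:ℝ) α, ‖g y‖ ≤ ‖g c‖ := fun y hy => hcmax' hy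
  set q : ℝ := ‖μ / l‖ with hqdef
  set M : ℝ := ‖g c‖ with hMdef
  have hM0 : 0 ≤ M := norm_nonneg _
  have hwB : ∀ s ∈ Icc (0:ℝ) α, ‖w s‖ ≤ M + B := by
    intro s hs
    have h1 : w s = g s + (f1 * (1 - Complex.exp (-2 * l * ↑s)) / 2 + f0) := by
      rw [hgdef]; ring
    rw [h1]
    calc ‖g s + (f1 * (1 - Complex.exp (-2 * l * ↑s)) / 2 + f0)‖
        ≤ ‖g s‖ + ‖f1 * (1 - Complex.exp (-2 * l * ↑s)) / 2 + f0‖ := norm_add_le _ _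
      _ ≤ M + B := add_le_add (hcmax s hs) (hw0B s hs.1)
  have key : ∀ a : ℝ, 0 ≤ a → a ≤ α → ‖g a‖ ≤ q * ((M + B) * Real.tanh a) := by
    intro a ha haα
    have hga : g a = μ / (2 * l) * (I a - Complex.exp (-2 * l * ↑a) * J a) := hweq a ha
    rw [hga]
    exact hbound a ha (M + B) (by linarith) fun s hs => hwB s ⟨hs.1, hs.2.trans haα⟩
  have hq0 : 0 ≤ q := norm_nonneg _
  have hq1 : q < 1 := hsmall
  have hMineq : M ≤ q * (M + B) := by
    have h1 := key c hc.1 hc.2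
    have h2 : q * ((M + B) * Real.tanh c) ≤ q * (M + B) := by
      have ht1 := htanh_le_one c
      have ht0 := htanh_nonneg c hc.1
      nlinarith [mul_le_mul_of_nonneg_left ht1 (mul_nonneg hq0 (add_nonneg hM0 hB0))]
    exact h1.trans h2
  have hta0 := htanh_nonneg α hα
  have hfinal := key α hα le_rfl
  have hgoal : ‖g α‖ ≤ q * Real.tanh α * B / (1 - q) := by
    rw [le_div_iff₀ (by linarith : (0:ℝ) < 1 - q)]
    have hstep : ‖g α‖ * (1 - q) ≤ q * ((M + B) * Real.tanh α) * (1 - q) :=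
      mul_le_mul_of_nonneg_right hfinal (by linarith)
    have hstep2 : q * ((M + B) * Real.tanh α) * (1 - q) ≤ q * Real.tanh α * B := by
      nlinarith [mul_nonneg hq0 hta0, hMineq, hB0, hM0]
    linarith
  exact hgoal
end

section
/- Let r be real with 1 < r < √2 and let τ ∈ ℂ satisfy |τ - 1| ≤ r and Re τ ≤ 1. Then |τ(1-τ)| < |1+τ|. -/
theorem abs_mul_lt_of_mem_region (r : ℝ) (hr1 : 1 < r) (hr2 : r < Real.sqrt 2)
    (τ : ℂ) (hτ : ‖τ - 1‖ ≤ r) (hre : τ.re ≤ 1) :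
    ‖τ * (1 - τ)‖ < ‖1 + τ‖ := by
  have hr2' : r ^ 2 < 2 := by
    have : r ^ 2 < (Real.sqrt 2) ^ 2 := by
      apply pow_lt_pow_left₀ hr2 (by linarith) (by norm_num)
    simpa [Real.sq_sqrt (by norm_num : (2:ℝ) ≥ 0)] using this
  have key : r * ‖τ‖ < ‖1 + τ‖ := by
    have h1 : ‖τ - 1‖ ^ 2 ≤ r ^ 2 := by
      apply pow_le_pow_left₀ (norm_nonneg _) hτ
    have h2 : ‖τ - 1‖ ^ 2 = (τ.re - 1) ^ 2 + τ.im ^ 2 := by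
      rw [Complex.sq_norm]
      simp [Complex.normSq_apply, Complex.sub_re, Complex.sub_im]
      ring
    have h3 : ‖(1:ℂ) + τ‖ ^ 2 = (1 + τ.re) ^ 2 + τ.im ^ 2 := by
      rw [Complex.sq_norm]
      simp [Complex.normSq_apply, Complex.add_re, Complex.add_im]
      ring
    have h4 : ‖τ‖ ^ 2 = τ.re ^ 2 + τ.im ^ 2 := by
      rw [Complex.sq_norm]
      simp [Complex.normSq_apply]
      ring
    have hsq : (r * ‖τ‖) ^ 2 < ‖(1:ℂ) + τ‖ ^ 2 := by
      rw [mul_pow, h4, h3]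
      nlinarith [h1, h2, sq_nonneg τ.im, sq_nonneg (r - 1), sq_nonneg (τ.re - 1),
        sq_nonneg (r ^ 2 - 2), mul_pos (sub_pos.2 hr1) (sub_pos.2 hr1)]
    exact lt_of_pow_lt_pow_left₀ 2 (norm_nonneg _) hsq
  calc ‖τ * (1 - τ)‖ = ‖τ‖ * ‖1 - τ‖ := norm_mul _ _
    _ = ‖τ‖ * ‖τ - 1‖ := by rw [norm_sub_rev]
    _ ≤ ‖τ‖ * r := by
        exact mul_le_mul_of_nonneg_left hτ (norm_nonneg _)
    _ = r * ‖τ‖ := mul_comm _ _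
    _ < ‖1 + τ‖ := key
end
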